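/- The pseudocircle S (the four-point space {a₁, a₂, b₁, b₂} with opens ∅, {b₁}, {b₂}, {b₁,b₂}, {b₁,b₂,a₁}, {b₁,b₂,a₂}, S) has Lusternik–Schnirelmann category cat^op(S) = 1: S cannot be covered by a single open set with nullhomotopic inclusion, but it is covered by the two open sets {b₁,b₂,a₁} and {b₁,b₂,a₂}, each of whose inclusions into S is nullhomotopic. -/

import Mathlib

/-- Lusternik–Schnirelmann category: least `n` such that `X` has an open cover by `n+1` open
sets each of whose inclusions into `X` is nullhomotopic; `⊤` if no such cover exists. -/
noncomputable def catLS (X : Type*) [TopologicalSpace X] : ℕ∞ :=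
  sInf {N : ℕ∞ | ∃ n : ℕ, N = n ∧ ∃ U : Fin (n + 1) → Set X,
    (∀ i, IsOpen (U i)) ∧ (∀ x, ∃ i, x ∈ U i) ∧
    ∀ i, ∃ x₀ : X, ((ContinuousMap.id X).restrict (U i)).Homotopic (ContinuousMap.const _ x₀)}

/-- The pseudocircle: four points `a₁, a₂, b₁, b₂`. -/
inductive PC : Type
  | a1 | a2 | b1 | b2

/-- The pseudocircle topology, generated by the opens
`{b₁}`, `{b₂}`, `{b₁,b₂,a₁}`, `{b₁,b₂,a₂}` (its open sets are exactly
`∅`, `{b₁}`, `{b₂}`, `{b₁,b₂}`, `{b₁,b₂,a₁}`, `{b₁,b₂,a₂}` and the whole space). -/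
instance : TopologicalSpace PC :=
  TopologicalSpace.generateFrom
    {{PC.b1}, {PC.b2}, {PC.b1, PC.b2, PC.a1}, {PC.b1, PC.b2, PC.a2}}

deriving instance DecidableEq for PC

instance : Fintype PC :=
  ⟨⟨{PC.a1, PC.a2, PC.b1, PC.b2}, by decide⟩, by intro x; cases x <;> decide⟩

open unitInterval

/-- the invariant satisfied by all open sets of `PC` -/
lemma pc_inv {s : Set PC} (hs : IsOpen s) :
    (PC.a1 ∈ s → PC.b1 ∈ s ∧ PC.b2 ∈ s) ∧ (PC.a2 ∈ s → PC.b1 ∈ s ∧ PC.b2 ∈ s) := by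
  have hs' : TopologicalSpace.GenerateOpen
      {{PC.b1}, {PC.b2}, {PC.b1, PC.b2, PC.a1}, {PC.b1, PC.b2, PC.a2}} s := hs
  induction hs' with
  | basic u hu =>
      simp only [Set.mem_insert_iff, Set.mem_singleton_iff] at hu
      rcases hu with h | h | h | h <;> subst h <;> simp
  | univ => simp
  | inter u v hu hv ihu ihv =>
      have iu := ihu hu; have iv := ihv hv
      refine ⟨fun h => ?_, fun h => ?_⟩
      · exact ⟨⟨(iu.1 h.1).1, (iv.1 h.2).1⟩, ⟨(iu.1 h.1).2, (iv.1 h.2).2⟩⟩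
      · exact ⟨⟨(iu.2 h.1).1, (iv.2 h.2).1⟩, ⟨(iu.2 h.1).2, (iv.2 h.2).2⟩⟩
  | sUnion S hS ih =>
      refine ⟨fun h => ?_, fun h => ?_⟩
      · rcases h with ⟨u, hu, hx⟩
        have iu := ih u hu (hS u hu)
        exact ⟨⟨u, hu, (iu.1 hx).1⟩, ⟨u, hu, (iu.1 hx).2⟩⟩
      · rcases h with ⟨u, hu, hx⟩
        have iu := ih u hu (hS u hu)
        exact ⟨⟨u, hu, (iu.2 hx).1⟩, ⟨u, hu, (iu.2 hx).2⟩⟩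

/-- the minimal open neighbourhood of each point of `PC` -/
def minOpen : PC → Set PC
  | .b1 => {PC.b1}
  | .b2 => {PC.b2}
  | .a1 => {PC.b1, PC.b2, PC.a1}
  | .a2 => {PC.b1, PC.b2, PC.a2}

lemma isOpen_minOpen (x : PC) : IsOpen (minOpen x) := by
  cases x <;>
    exact TopologicalSpace.GenerateOpen.basic _ (by simp [minOpen])

lemma mem_minOpen_self (x : PC) : x ∈ minOpen x := by
  cases x <;> simp [minOpen]

lemma minOpen_subset {V : Set PC} (hV : IsOpen V) {x : PC} (hx : x ∈ V) :
    minOpen x ⊆ V := by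
  cases x with
  | b1 => simpa [minOpen] using hx
  | b2 => simpa [minOpen] using hx
  | a1 =>
      have h := (pc_inv hV).1 hx
      simp [minOpen, Set.insert_subset_iff, h.1, h.2, hx]
  | a2 =>
      have h := (pc_inv hV).2 hx
      simp [minOpen, Set.insert_subset_iff, h.1, h.2, hx]

lemma eq_id_of_ge (f : PC → PC) (hf : Continuous f) (h : ∀ x, f x ∈ minOpen x) :
    f = id := by
  have hb1 : f PC.b1 = PC.b1 := by simpa [minOpen] using h PC.b1
  have hb2 : f PC.b2 = PC.b2 := by simpa [minOpen] using h PC.b2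
  have ha1 : f PC.a1 = PC.a1 := by
    have h1 := h PC.a1
    cases hv : f PC.a1 with
    | a1 => rfl
    | a2 => rw [hv] at h1; simp [minOpen] at h1
    | b1 =>
        have hopen : IsOpen (f ⁻¹' {PC.b1}) :=
          (isOpen_minOpen PC.b1).preimage hf
        have : PC.b2 ∈ f ⁻¹' {PC.b1} :=
          ((pc_inv hopen).1 (by simp [Set.mem_preimage, hv])).2
        simp [Set.mem_preimage, hb2] at this
    | b2 =>
        have hopen : IsOpen (f ⁻¹' {PC.b2}) :=
          (isOpen_minOpen PC.b2).preimage hf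
        have : PC.b1 ∈ f ⁻¹' {PC.b2} :=
          ((pc_inv hopen).1 (by simp [Set.mem_preimage, hv])).1
        simp [Set.mem_preimage, hb1] at this
  have ha2 : f PC.a2 = PC.a2 := by
    have h1 := h PC.a2
    cases hv : f PC.a2 with
    | a2 => rfl
    | a1 => rw [hv] at h1; simp [minOpen] at h1
    | b1 =>
        have hopen : IsOpen (f ⁻¹' {PC.b1}) :=
          (isOpen_minOpen PC.b1).preimage hf
        have : PC.b2 ∈ f ⁻¹' {PC.b1} :=
          ((pc_inv hopen).2 (by simp [Set.mem_preimage, hv])).2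
        simp [Set.mem_preimage, hb2] at this
    | b2 =>
        have hopen : IsOpen (f ⁻¹' {PC.b2}) :=
          (isOpen_minOpen PC.b2).preimage hf
        have : PC.b1 ∈ f ⁻¹' {PC.b2} :=
          ((pc_inv hopen).2 (by simp [Set.mem_preimage, hv])).1
        simp [Set.mem_preimage, hb1] at this
  funext x
  cases x <;> assumption

lemma eq_id_of_le (f : PC → PC) (hf : Continuous f) (h : ∀ x, x ∈ minOpen (f x)) :
    f = id := by
  have ha1 : f PC.a1 = PC.a1 := by
    have h1 := h PC.a1
    cases hv : f PC.a1 <;> rw [hv] at h1 <;> simp [minOpen] at h1 <;> rfl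
  have ha2 : f PC.a2 = PC.a2 := by
    have h1 := h PC.a2
    cases hv : f PC.a2 <;> rw [hv] at h1 <;> simp [minOpen] at h1 <;> rfl
  have hb1 : f PC.b1 = PC.b1 := by
    have h1 := h PC.b1
    cases hv : f PC.b1 with
    | b1 => rfl
    | b2 => rw [hv] at h1; simp [minOpen] at h1
    | a1 =>
        -- preimage of {b1,b2,a2} contains a2, hence b1, i.e. f b1 ∈ {b1,b2,a2}
        have hopen : IsOpen (f ⁻¹' minOpen PC.a2) :=
          (isOpen_minOpen PC.a2).preimage hf
        have hmem : PC.a2 ∈ f ⁻¹' minOpen PC.a2 := by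
          simp [Set.mem_preimage, ha2, mem_minOpen_self]
        have : PC.b1 ∈ f ⁻¹' minOpen PC.a2 := ((pc_inv hopen).2 hmem).1
        rw [Set.mem_preimage, hv] at this
        simp [minOpen] at this
    | a2 =>
        have hopen : IsOpen (f ⁻¹' minOpen PC.a1) :=
          (isOpen_minOpen PC.a1).preimage hf
        have hmem : PC.a1 ∈ f ⁻¹' minOpen PC.a1 := by
          simp [Set.mem_preimage, ha1, mem_minOpen_self]
        have : PC.b1 ∈ f ⁻¹' minOpen PC.a1 := ((pc_inv hopen).1 hmem).1
        rw [Set.mem_preimage, hv] at this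
        simp [minOpen] at this
  have hb2 : f PC.b2 = PC.b2 := by
    have h1 := h PC.b2
    cases hv : f PC.b2 with
    | b2 => rfl
    | b1 => rw [hv] at h1; simp [minOpen] at h1
    | a1 =>
        have hopen : IsOpen (f ⁻¹' minOpen PC.a2) :=
          (isOpen_minOpen PC.a2).preimage hf
        have hmem : PC.a2 ∈ f ⁻¹' minOpen PC.a2 := by
          simp [Set.mem_preimage, ha2, mem_minOpen_self]
        have : PC.b2 ∈ f ⁻¹' minOpen PC.a2 := ((pc_inv hopen).2 hmem).2
        rw [Set.mem_preimage, hv] at this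
        simp [minOpen] at this
    | a2 =>
        have hopen : IsOpen (f ⁻¹' minOpen PC.a1) :=
          (isOpen_minOpen PC.a1).preimage hf
        have hmem : PC.a1 ∈ f ⁻¹' minOpen PC.a1 := by
          simp [Set.mem_preimage, ha1, mem_minOpen_self]
        have : PC.b2 ∈ f ⁻¹' minOpen PC.a1 := ((pc_inv hopen).1 hmem).2
        rw [Set.mem_preimage, hv] at this
        simp [minOpen] at this
  funext x
  cases x <;> assumption

/-- The pseudocircle is not contractible. -/
lemma pc_not_contractible (x₀ : PC)
    (F : (ContinuousMap.id PC).Homotopy (ContinuousMap.const PC x₀)) : False := by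
  set A : Set I := {t | ∀ x, F (t, x) = x} with hA
  have hc : ∀ x : PC, Continuous fun s : I => F (s, x) :=
    fun x => F.continuous.comp (Continuous.prodMk_left x)
  have hct : ∀ t : I, Continuous fun x : PC => F (t, x) :=
    fun t => F.continuous.comp (Continuous.prodMk_right t)
  have hopen : IsOpen A := by
    rw [isOpen_iff_mem_nhds]
    intro t ht
    have hO : IsOpen (⋂ x : PC, (fun s : I => F (s, x)) ⁻¹' minOpen x) :=
      isOpen_iInter_of_finite fun x => (isOpen_minOpen x).preimage (hc x)
    have htO : t ∈ ⋂ x : PC, (fun s : I => F (s, x)) ⁻¹' minOpen x := by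
      refine Set.mem_iInter.2 fun x => ?_
      simp only [Set.mem_preimage, ht x]
      exact mem_minOpen_self x
    refine Filter.mem_of_superset (hO.mem_nhds htO) ?_
    intro s hs
    have hs' : ∀ x : PC, F (s, x) ∈ minOpen x := fun x =>
      Set.mem_iInter.1 hs x
    have := eq_id_of_ge (fun x => F (s, x)) (hct s) hs'
    intro x
    exact congrFun this x
  have hclosed : IsClosed A := by
    refine isClosed_of_closure_subset fun t ht => ?_
    have hO : IsOpen (⋂ x : PC, (fun s : I => F (s, x)) ⁻¹' minOpen (F (t, x))) :=
      isOpen_iInter_of_finite fun x => (isOpen_minOpen _).preimage (hc x)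
    have htO : t ∈ ⋂ x : PC, (fun s : I => F (s, x)) ⁻¹' minOpen (F (t, x)) :=
      Set.mem_iInter.2 fun x => mem_minOpen_self _
    rcases mem_closure_iff.1 ht _ hO htO with ⟨s, hsO, hsA⟩
    have hkey : ∀ x : PC, x ∈ minOpen (F (t, x)) := by
      intro x
      have := Set.mem_iInter.1 hsO x
      rwa [Set.mem_preimage, hsA x] at this
    have := eq_id_of_le (fun x => F (t, x)) (hct t) hkey
    intro x
    exact congrFun this x
  have hA0 : (0 : I) ∈ A := fun x => F.apply_zero x
  have huniv : A = Set.univ := IsClopen.eq_univ ⟨hclosed, hopen⟩ ⟨0, hA0⟩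
  have h1 : (1 : I) ∈ A := huniv ▸ Set.mem_univ _
  have e1 : F (1, PC.b1) = PC.b1 := h1 PC.b1
  have e2 : F (1, PC.b2) = PC.b2 := h1 PC.b2
  rw [F.apply_one] at e1 e2
  simp only [ContinuousMap.const_apply] at e1 e2
  exact PC.noConfusion (e1 ▸ e2)

/-- The contraction of each maximal open set of the pseudocircle. -/
lemma cont_contraction (a : PC) :
    Continuous fun p : I × ↥(minOpen a) => if p.1 = 1 then a else (p.2 : PC) := by
  rw [continuous_def]
  intro s hs
  by_cases ha : a ∈ s
  · have hsub : minOpen a ⊆ s := minOpen_subset hs ha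
    have : (fun p : I × ↥(minOpen a) => if p.1 = 1 then a else (p.2 : PC)) ⁻¹' s
        = Set.univ := by
      refine Set.eq_univ_of_forall fun p => ?_
      by_cases h1 : p.1 = 1
      · simp [Set.mem_preimage, h1, ha]
      · simpa [Set.mem_preimage, h1] using hsub p.2.2
    rw [this]; exact isOpen_univ
  · have : (fun p : I × ↥(minOpen a) => if p.1 = 1 then a else (p.2 : PC)) ⁻¹' s
        = ({(1 : I)}ᶜ ×ˢ (Subtype.val ⁻¹' s)) := by
      ext p
      by_cases h1 : p.1 = 1
      · simp [Set.mem_preimage, Set.mem_prod, h1, ha]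
      · simp [Set.mem_preimage, Set.mem_prod, h1]
    rw [this]
    exact (isClosed_singleton.isOpen_compl).prod (hs.preimage continuous_subtype_val)

lemma nullhomotopic_minOpen (a : PC) :
    ∃ x₀ : PC, ((ContinuousMap.id PC).restrict (minOpen a)).Homotopic
      (ContinuousMap.const _ x₀) := by
  have h01 : (0 : I) ≠ 1 := fun h => by
    have := congrArg Subtype.val h
    norm_num at this
  exact ⟨a, ⟨⟨⟨fun p => if p.1 = 1 then a else (p.2 : PC), cont_contraction a⟩,
    fun x => by simp [h01], fun x => by simp⟩⟩⟩

theorem catLS_pseudocircle : catLS PC = 1 := by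
  unfold catLS
  refine le_antisymm (sInf_le ?_) (le_sInf ?_)
  · -- 1 is in the set: cover by the two maximal open sets
    refine ⟨1, rfl, ![minOpen PC.a1, minOpen PC.a2], ?_, ?_, ?_⟩
    · intro i
      fin_cases i <;> simp <;> exact isOpen_minOpen _
    · intro x
      cases x with
      | a1 => exact ⟨0, by simp [minOpen]⟩
      | a2 => exact ⟨1, by simp [minOpen]⟩
      | b1 => exact ⟨0, by simp [minOpen]⟩
      | b2 => exact ⟨0, by simp [minOpen]⟩
    · intro i
      fin_cases i
      exacts [nullhomotopic_minOpen PC.a1, nullhomotopic_minOpen PC.a2]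
  · -- every element of the set is ≥ 1
    rintro N ⟨n, rfl, U, hUopen, hUcover, hUnull⟩
    rcases Nat.eq_zero_or_pos n with hn | hn
    · exfalso
      subst hn
      have hall : ∀ x : PC, x ∈ U 0 := by
        intro x
        rcases hUcover x with ⟨i, hi⟩
        rwa [Fin.eq_zero i] at hi
      rcases hUnull 0 with ⟨x₀, ⟨G⟩⟩
      set e : C(PC, ↥(U 0)) :=
        ⟨fun x => ⟨x, hall x⟩, Continuous.subtype_mk continuous_id _⟩ with he
      have G' := G.compContinuousMap e
      have h₀ : ((ContinuousMap.id PC).restrict (U 0)).comp e = ContinuousMap.id PC := by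
        ext x; rfl
      have h₁ : (ContinuousMap.const (↥(U 0)) x₀).comp e = ContinuousMap.const PC x₀ := by
        ext x; rfl
      exact pc_not_contractible x₀ (G'.cast h₀ h₁)
    · exact_mod_cast Nat.one_le_cast.mpr hn
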